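/- Let T be a Puppe triangulated category and let (a, b, c) be an endomorphism of a distinguished triangle A →f B → C_f → A[1] (i.e., a morphism of the triangle to itself) such that a, b, c are idempotents. If a and b are split idempotents in T, then (a, b, c) is a split idempotent in the category Triangles₀ of triangles, and in particular c is a split idempotent in T. -/

import Mathlib

open CategoryTheory CategoryTheory.Limits CategoryTheory.Pretriangulated
open CategoryTheory.Preadditive

/-- If an endomorphism of the third object of a distinguished triangle is killed by
precomposition with `mor₂` and by postcomposition with `mor₃`, then it is square-zero. -/
lemma stmt16_sq_zero {C : Type*} [Category C] [Preadditive C] [HasZeroObject C] [HasShift C ℤ]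
    [∀ n : ℤ, (shiftFunctor C n).Additive] [Pretriangulated C]
    (S : Triangle C) (hS : S ∈ distTriang C) (e : S.obj₃ ⟶ S.obj₃)
    (h1 : S.mor₂ ≫ e = 0) (h2 : e ≫ S.mor₃ = 0) : e ≫ e = 0 := by
  obtain ⟨β, hβ⟩ := Triangle.coyoneda_exact₃ S hS e h2
  calc e ≫ e = β ≫ S.mor₂ ≫ e := by rw [hβ, Category.assoc]
  _ = β ≫ 0 := by rw [h1]
  _ = 0 := comp_zero

/-- In a (Puppe) triangulated category, let `(a, b, c)` be an idempotent
endomorphism of a distinguished triangle. If `a` and `b` are split idempotents, then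
`(a, b, c)` is a split idempotent in the category of (distinguished) triangles; in
particular `c` is a split idempotent. -/
theorem stmt_16 {C : Type*} [Category C] [Preadditive C] [HasZeroObject C] [HasShift C ℤ]
    [∀ n : ℤ, (shiftFunctor C n).Additive] [Pretriangulated C]
    (T : Triangle C) (hT : T ∈ distTriang C)
    (φ : T ⟶ T) (hφ : φ ≫ φ = φ)
    (ha : φ.hom₁ ≫ φ.hom₁ = φ.hom₁) (hb : φ.hom₂ ≫ φ.hom₂ = φ.hom₂)
    (hc : φ.hom₃ ≫ φ.hom₃ = φ.hom₃)
    (hasplit : ∃ (B₁ : C) (r : T.obj₁ ⟶ B₁) (j : B₁ ⟶ T.obj₁),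
      r ≫ j = φ.hom₁ ∧ j ≫ r = 𝟙 B₁)
    (hbsplit : ∃ (B₂ : C) (r : T.obj₂ ⟶ B₂) (j : B₂ ⟶ T.obj₂),
      r ≫ j = φ.hom₂ ∧ j ≫ r = 𝟙 B₂) :
    (∃ (T' : Triangle C), (T' ∈ distTriang C) ∧
      ∃ (r : T ⟶ T') (j : T' ⟶ T), r ≫ j = φ ∧ j ≫ r = 𝟙 T') ∧
    (∃ (B₃ : C) (r : T.obj₃ ⟶ B₃) (j : B₃ ⟶ T.obj₃),
      r ≫ j = φ.hom₃ ∧ j ≫ r = 𝟙 B₃) := by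
  obtain ⟨B₁, r₁, j₁, hr₁, hj₁⟩ := hasplit
  obtain ⟨B₂, r₂, j₂, hr₂, hj₂⟩ := hbsplit
  -- the candidate triangle
  obtain ⟨C₃, g', h', hT'⟩ := Pretriangulated.distinguished_cocone_triangle (j₁ ≫ T.mor₁ ≫ r₂)
  set T' : Triangle C := Triangle.mk (j₁ ≫ T.mor₁ ≫ r₂) g' h' with hT'def
  have hm₁ : T'.mor₁ = j₁ ≫ T.mor₁ ≫ r₂ := rfl
  -- the morphism r : T ⟶ T' on the first two components
  have hcommr : T.mor₁ ≫ r₂ = r₁ ≫ T'.mor₁ := by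
    rw [hm₁]
    calc T.mor₁ ≫ r₂ = T.mor₁ ≫ r₂ ≫ (j₂ ≫ r₂) := by rw [hj₂, Category.comp_id]
    _ = (T.mor₁ ≫ (r₂ ≫ j₂)) ≫ r₂ := by simp only [Category.assoc]
    _ = (T.mor₁ ≫ φ.hom₂) ≫ r₂ := by rw [hr₂]
    _ = (φ.hom₁ ≫ T.mor₁) ≫ r₂ := by rw [φ.comm₁]
    _ = ((r₁ ≫ j₁) ≫ T.mor₁) ≫ r₂ := by rw [hr₁]
    _ = r₁ ≫ j₁ ≫ T.mor₁ ≫ r₂ := by simp only [Category.assoc]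
  obtain ⟨rc, hrc₂, hrc₃⟩ :=
    Pretriangulated.complete_distinguished_triangle_morphism T T' hT hT' r₁ r₂ hcommr
  -- the morphism j : T' ⟶ T on the first two components
  have hcommj : T'.mor₁ ≫ j₂ = j₁ ≫ T.mor₁ := by
    rw [hm₁]
    calc (j₁ ≫ T.mor₁ ≫ r₂) ≫ j₂ = j₁ ≫ (T.mor₁ ≫ (r₂ ≫ j₂)) := by simp only [Category.assoc]
    _ = j₁ ≫ (T.mor₁ ≫ φ.hom₂) := by rw [hr₂]
    _ = j₁ ≫ (φ.hom₁ ≫ T.mor₁) := by rw [φ.comm₁]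
    _ = j₁ ≫ ((r₁ ≫ j₁) ≫ T.mor₁) := by rw [hr₁]
    _ = (j₁ ≫ r₁) ≫ (j₁ ≫ T.mor₁) := by simp only [Category.assoc]
    _ = j₁ ≫ T.mor₁ := by rw [hj₁, Category.id_comp]
  obtain ⟨jc, hjc₂, hjc₃⟩ :=
    Pretriangulated.complete_distinguished_triangle_morphism T' T hT' hT j₁ j₂ hcommj
  -- first correction: make jc a retraction of rc
  obtain ⟨ε₀, hε₀⟩ : ∃ x : T'.obj₃ ⟶ T'.obj₃, x = jc ≫ rc - 𝟙 T'.obj₃ := ⟨_, rfl⟩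
  have hψ : jc ≫ rc = 𝟙 T'.obj₃ + ε₀ := by rw [hε₀]; abel
  have hε₀₂ : T'.mor₂ ≫ ε₀ = 0 := by
    erw [hε₀, comp_sub, Category.comp_id, ← Category.assoc, hjc₂, Category.assoc, hrc₂,
      ← Category.assoc, hj₂, sub_eq_zero]
    exact Category.id_comp _
  have hε₀₃ : ε₀ ≫ T'.mor₃ = 0 := by
    erw [hε₀, sub_comp, Category.id_comp, Category.assoc, ← hrc₃, ← Category.assoc, ← hjc₃,
      Category.assoc, ← CategoryTheory.Functor.map_comp, hj₁, sub_eq_zero]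
    have : (shiftFunctor C (1:ℤ)).map (𝟙 B₁) = 𝟙 _ := CategoryTheory.Functor.map_id _ _
    erw [this]
    exact Category.comp_id _
  have hε₀sq : ε₀ ≫ ε₀ = 0 := stmt16_sq_zero T' hT' ε₀ hε₀₂ hε₀₃
  obtain ⟨k₂, hk₂⟩ : ∃ x : T'.obj₃ ⟶ T.obj₃, x = jc - ε₀ ≫ jc := ⟨_, rfl⟩
  have hk₂rc : k₂ ≫ rc = 𝟙 T'.obj₃ := by
    rw [hk₂, sub_comp, Category.assoc, hψ, comp_add, Category.comp_id, hε₀sq, add_zero]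
    abel
  -- the idempotent d on T.obj₃ and its relations
  obtain ⟨d, hd⟩ : ∃ x : T.obj₃ ⟶ T.obj₃, x = rc ≫ k₂ := ⟨_, rfl⟩
  have hdd : d ≫ d = d := by
    rw [hd, Category.assoc, ← Category.assoc k₂ rc, hk₂rc, Category.id_comp]
  have hk₂mor₃ : k₂ ≫ T.mor₃ = T'.mor₃ ≫ j₁⟦(1:ℤ)⟧' := by
    rw [hk₂, sub_comp, Category.assoc, ← hjc₃, ← Category.assoc, hε₀₃, zero_comp,
      sub_zero, hjc₃]
  have hmor₂k₂ : T'.mor₂ ≫ k₂ = j₂ ≫ T.mor₂ := by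
    rw [hk₂, comp_sub, ← Category.assoc, hε₀₂, zero_comp, sub_zero, hjc₂]
    rfl
  have hd₂ : T.mor₂ ≫ d = φ.hom₂ ≫ T.mor₂ := by
    erw [hd, ← Category.assoc, hrc₂, Category.assoc, hmor₂k₂, ← Category.assoc, hr₂]
  have hd₃ : d ≫ T.mor₃ = T.mor₃ ≫ φ.hom₁⟦(1:ℤ)⟧' := by
    erw [hd, Category.assoc, hk₂mor₃, ← Category.assoc, ← hrc₃, Category.assoc,
      ← CategoryTheory.Functor.map_comp, hr₁]
  -- the square-zero difference ε = c - d
  obtain ⟨ε, hε⟩ : ∃ x : T.obj₃ ⟶ T.obj₃, x = φ.hom₃ - d := ⟨_, rfl⟩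
  have hcde : φ.hom₃ = d + ε := by rw [hε]; abel
  have hε₂ : T.mor₂ ≫ ε = 0 := by
    rw [hε, comp_sub, hd₂, φ.comm₂, sub_self]
  have hε₃ : ε ≫ T.mor₃ = 0 := by
    rw [hε, sub_comp, hd₃, φ.comm₃, sub_self]
  have hee : ε ≫ ε = 0 := stmt16_sq_zero T hT ε hε₂ hε₃
  -- from idempotency of φ.hom₃ : d ≫ ε + ε ≫ d = ε
  have hde : d ≫ ε + ε ≫ d = ε := by
    have h := hc
    rw [hcde, add_comp, comp_add, comp_add, hdd, hee, add_zero, add_assoc] at h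
    exact add_left_cancel h
  have hed : ε ≫ d = ε - d ≫ ε := by rw [eq_sub_iff_add_eq, add_comm]; exact hde
  have hded : d ≫ (ε ≫ d) = 0 := by
    rw [hed, comp_sub, ← Category.assoc, hdd, sub_self]
  have hde' : d ≫ ε = ε - ε ≫ d := by rw [eq_sub_iff_add_eq]; exact hde
  have hede : ε ≫ (d ≫ ε) = 0 := by
    rw [hde', comp_sub, ← Category.assoc, hee]
    simp
  -- reassoc versions
  have hdd' : ∀ {Z : C} (x : T.obj₃ ⟶ Z), d ≫ d ≫ x = d ≫ x := by
    intro Z x; rw [← Category.assoc, hdd]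
  have hee' : ∀ {Z : C} (x : T.obj₃ ⟶ Z), ε ≫ ε ≫ x = 0 := by
    intro Z x; rw [← Category.assoc, hee, zero_comp]
  have hded' : ∀ {Z : C} (x : T.obj₃ ⟶ Z), d ≫ ε ≫ d ≫ x = 0 := by
    intro Z x; rw [← Category.assoc, ← Category.assoc, Category.assoc d ε d, hded, zero_comp]
  have hede' : ∀ {Z : C} (x : T.obj₃ ⟶ Z), ε ≫ d ≫ ε ≫ x = 0 := by
    intro Z x; rw [← Category.assoc, ← Category.assoc, Category.assoc ε d ε, hede, zero_comp]
  -- the unit u = 1 + n conjugating d into φ.hom₃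
  obtain ⟨n, hn⟩ : ∃ x : T.obj₃ ⟶ T.obj₃, x = d ≫ ε - ε ≫ d := ⟨_, rfl⟩
  have hn₂ : T.mor₂ ≫ n = 0 := by
    rw [hn, comp_sub, ← Category.assoc, ← Category.assoc, hd₂, Category.assoc, hε₂]
    simp
  have hn₃ : n ≫ T.mor₃ = 0 := by
    rw [hn, sub_comp, Category.assoc, Category.assoc, hε₃, comp_zero, hd₃,
      ← Category.assoc, hε₃]
    simp
  have hnn : n ≫ n = 0 := by
    rw [hn]
    simp only [comp_sub, sub_comp, Category.assoc, hded', hede', hdd', hee',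
      hded, hede, hdd, hee, comp_zero, zero_comp, sub_zero, zero_sub, sub_self, neg_zero]
  have hkey : (𝟙 T.obj₃ + n) ≫ φ.hom₃ = d ≫ (𝟙 T.obj₃ + n) := by
    rw [hcde, hn]
    simp only [comp_add, add_comp, comp_sub, sub_comp, Category.assoc, Category.id_comp,
      Category.comp_id, hded', hede', hdd', hee', hded, hede, hdd, hee,
      comp_zero, zero_comp, sub_zero, zero_sub, sub_self, neg_zero]
    rw [hed]
    abel
  have hun : (𝟙 T.obj₃ - n) ≫ (𝟙 T.obj₃ + n) = 𝟙 T.obj₃ := by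
    simp only [comp_add, sub_comp, Category.id_comp, Category.comp_id, hnn]
    abel
  have hnu : (𝟙 T.obj₃ + n) ≫ (𝟙 T.obj₃ - n) = 𝟙 T.obj₃ := by
    simp only [comp_sub, add_comp, Category.id_comp, Category.comp_id, hnn]
    abel
  -- the final morphisms
  obtain ⟨rf₃, hrf₃⟩ : ∃ x : T.obj₃ ⟶ T'.obj₃, x = (𝟙 T.obj₃ - n) ≫ rc := ⟨_, rfl⟩
  obtain ⟨jf₃, hjf₃⟩ : ∃ x : T'.obj₃ ⟶ T.obj₃, x = k₂ ≫ (𝟙 T.obj₃ + n) := ⟨_, rfl⟩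
  have hjr₃ : jf₃ ≫ rf₃ = 𝟙 T'.obj₃ := by
    rw [hjf₃, hrf₃, Category.assoc, ← Category.assoc _ _ rc, hnu, Category.id_comp, hk₂rc]
  have hrj₃ : rf₃ ≫ jf₃ = φ.hom₃ := by
    rw [hrf₃, hjf₃, Category.assoc, ← Category.assoc rc k₂, ← hd, ← hkey,
      ← Category.assoc, hun, Category.id_comp]
  have hrf₃₂ : T.mor₂ ≫ rf₃ = r₂ ≫ T'.mor₂ := by
    rw [hrf₃, ← Category.assoc, comp_sub, Category.comp_id, hn₂, sub_zero, hrc₂]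
    rfl
  have hrf₃₃ : T.mor₃ ≫ r₁⟦(1:ℤ)⟧' = rf₃ ≫ T'.mor₃ := by
    rw [hrf₃, Category.assoc, ← hrc₃, ← Category.assoc, sub_comp, Category.id_comp, hn₃,
      sub_zero]
    rfl
  have hjf₃₂ : T'.mor₂ ≫ jf₃ = j₂ ≫ T.mor₂ := by
    erw [hjf₃, ← Category.assoc, hmor₂k₂, Category.assoc, comp_add, Category.comp_id,
      hn₂, add_zero]
    rfl
  have hjf₃₃ : T'.mor₃ ≫ j₁⟦(1:ℤ)⟧' = jf₃ ≫ T.mor₃ := by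
    rw [hjf₃, Category.assoc, add_comp, Category.id_comp, hn₃, add_zero, hk₂mor₃]
  refine ⟨⟨T', hT',
    { hom₁ := r₁, hom₂ := r₂, hom₃ := rf₃,
      comm₁ := hcommr, comm₂ := hrf₃₂, comm₃ := hrf₃₃ },
    { hom₁ := j₁, hom₂ := j₂, hom₃ := jf₃,
      comm₁ := hcommj, comm₂ := hjf₃₂, comm₃ := hjf₃₃ }, ?_, ?_⟩,
    T'.obj₃, rf₃, jf₃, hrj₃, hjr₃⟩
  · ext
    · exact hr₁
    · exact hr₂
    · exact hrj₃
  · ext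
    · exact hj₁
    · exact hj₂
    · exact hjr₃
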